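/- Let n be a natural number, k ≤ n, and t < n be natural numbers, and let s : {0, …, n−1} → ℤ be a function such that k + t − n ≤ s(i) ≤ k for every i and the sum of s(i) over all i equals t·k. Then there exists a set E ⊆ {0, …, n−1} of cardinality exactly k such that: (1) every index i with s(i) = k + t − n belongs to E; (2) no index i with s(i) = k belongs to E; and (3) the updated function s' defined by s'(i) = s(i) + 1 if i ∈ E and s'(i) = s(i) otherwise satisfies k + (t+1) − n ≤ s'(i) ≤ k for every i, and the sum of s'(i) over all i equals (t+1)·k. -/

import Mathlib

/-- Inductive step of the BMS generation algorithm: given partial row sums `s`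
with `k + t - n ≤ s i ≤ k` and total `t·k`, there is a set `E` of exactly `k`
indices containing all indices at the lower bound, none at the upper bound, and
such that incrementing `s` on `E` preserves the invariant for step `t + 1`. -/
theorem bms_inductive_step (n k t : ℕ) (hk : k ≤ n) (ht : t < n)
    (s : Fin n → ℤ)
    (hlb : ∀ i, (k : ℤ) + t - n ≤ s i)
    (hub : ∀ i, s i ≤ (k : ℤ))
    (hsum : ∑ i, s i = (t : ℤ) * k) :
    ∃ E : Finset (Fin n),
      E.card = k ∧
      (∀ i, s i = (k : ℤ) + t - n → i ∈ E) ∧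
      (∀ i, s i = (k : ℤ) → i ∉ E) ∧
      (∀ i, (k : ℤ) + (t + 1 : ℕ) - n ≤ (if i ∈ E then s i + 1 else s i) ∧
            (if i ∈ E then s i + 1 else s i) ≤ (k : ℤ)) ∧
      (∑ i, (if i ∈ E then s i + 1 else s i)) = ((t : ℤ) + 1) * k := by
  classical
  have htn : (t : ℤ) < (n : ℤ) := by exact_mod_cast ht
  set L : Finset (Fin n) := Finset.univ.filter (fun i => s i = (k : ℤ) + t - n) with hLdef
  set U : Finset (Fin n) := Finset.univ.filter (fun i => s i = (k : ℤ)) with hUdef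
  have hLU : L ⊆ Uᶜ := by
    intro i hi
    simp only [hLdef, Finset.mem_filter, Finset.mem_univ, true_and] at hi
    simp only [hUdef, Finset.mem_compl, Finset.mem_filter, Finset.mem_univ, true_and]
    intro h; rw [hi] at h; linarith
  -- card bounds
  have hsplitL : (t : ℤ) * k = ∑ i ∈ L, s i + ∑ i ∈ Lᶜ, s i := by
    rw [← hsum, Finset.sum_add_sum_compl]
  have hLsum : ∑ i ∈ L, s i = L.card * ((k : ℤ) + t - n) := by
    rw [Finset.sum_congr rfl (fun i hi => by
      simp only [hLdef, Finset.mem_filter] at hi; exact hi.2)]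
    simp [mul_comm]
    ring
  have hcards : (L.card : ℤ) + (Lᶜ.card : ℤ) = n := by
    have := Finset.card_add_card_compl L
    rw [Fintype.card_fin] at this
    exact_mod_cast this
  have hLcsum : ∑ i ∈ Lᶜ, s i ≤ (Lᶜ.card : ℤ) * k := by
    calc ∑ i ∈ Lᶜ, s i ≤ ∑ _i ∈ Lᶜ, (k : ℤ) := Finset.sum_le_sum (fun i _ => hub i)
    _ = (Lᶜ.card : ℤ) * k := by simp [mul_comm]
  have hLcard : (L.card : ℤ) ≤ k := by
    nlinarith [hsplitL, hLsum, hLcsum, hcards]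
  -- U bound
  have hsplitU : (t : ℤ) * k = ∑ i ∈ U, s i + ∑ i ∈ Uᶜ, s i := by
    rw [← hsum, Finset.sum_add_sum_compl]
  have hUsum : ∑ i ∈ U, s i = U.card * (k : ℤ) := by
    rw [Finset.sum_congr rfl (fun i hi => by
      simp only [hUdef, Finset.mem_filter] at hi; exact hi.2)]
    simp [mul_comm]
  have hcardsU : (U.card : ℤ) + (Uᶜ.card : ℤ) = n := by
    have := Finset.card_add_card_compl U
    rw [Fintype.card_fin] at this
    exact_mod_cast this
  have hUcsum : (Uᶜ.card : ℤ) * ((k : ℤ) + t - n) ≤ ∑ i ∈ Uᶜ, s i := by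
    calc (Uᶜ.card : ℤ) * ((k : ℤ) + t - n) = ∑ _i ∈ Uᶜ, ((k : ℤ) + t - n) := by
          simp [mul_comm]
          ring
    _ ≤ ∑ i ∈ Uᶜ, s i := Finset.sum_le_sum (fun i _ => hlb i)
  have hkn : (k : ℤ) ≤ n := by exact_mod_cast hk
  have hUcard : (k : ℤ) ≤ (Uᶜ.card : ℤ) := by
    nlinarith [hsplitU, hUsum, hUcsum, hcardsU]
  -- choose E
  have h1 : L.card ≤ k := by exact_mod_cast hLcard
  have h2 : k ≤ Uᶜ.card := by exact_mod_cast hUcard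
  obtain ⟨E, hLE, hEU, hEcard⟩ := Finset.exists_subsuperset_card_eq hLU h1 h2
  refine ⟨E, hEcard, ?_, ?_, ?_, ?_⟩
  · intro i hi
    exact hLE (by simp [hLdef, hi])
  · intro i hi hiE
    have := hEU hiE
    simp [hUdef, Finset.mem_compl] at this
    exact this hi
  · intro i
    constructor
    · by_cases hiE : i ∈ E
      · simp only [hiE, if_pos]
        have := hlb i
        push_cast
        linarith
      · simp only [hiE, if_neg, if_false]
        have hne : s i ≠ (k : ℤ) + t - n := by
          intro h
          exact hiE (hLE (by simp [hLdef, h]))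
        have := hlb i
        push_cast
        omega
    · by_cases hiE : i ∈ E
      · simp only [hiE, if_pos]
        have hne : s i ≠ (k : ℤ) := by
          have := hEU hiE
          simp [hUdef, Finset.mem_compl] at this
          exact this
        have := hub i
        omega
      · simp only [hiE, if_neg, if_false]
        exact hub i
  · have : ∑ i, (if i ∈ E then s i + 1 else s i)
        = ∑ i, s i + ∑ i, (if i ∈ E then (1 : ℤ) else 0) := by
      rw [← Finset.sum_add_distrib]
      refine Finset.sum_congr rfl (fun i _ => ?_)
      by_cases hiE : i ∈ E <;> simp [hiE]
    rw [this, hsum]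
    have : ∑ i, (if i ∈ E then (1 : ℤ) else 0) = (E.card : ℤ) := by
      simp [Finset.sum_ite_mem, Finset.sum_const]
    rw [this, hEcard]
    ring
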